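/- Suppose A is a real n×n matrix and dt > 0 satisfies dt ≤ min over i of m_i / (A i i + ∑_{j≠i} |A i j|), where m_i > 0 and A i i + ∑_{j≠i} |A i j| > 0 for all i. Then for every eigenvalue μ of the matrix M⁻¹A (M the diagonal matrix with entries m_i), if μ is real and nonnegative, dt·μ ≤ 1. -/
import Mathlib


open Finset in
/-- Gerschgorin-based time step bound: if `dt` is at most the minimum of
`m i / (A i i + ∑_{j ≠ i} |A i j|)`, then any real nonnegative eigenvalue `μ` of
`M⁻¹ * A` (with `M = diagonal m`) satisfies `dt * μ ≤ 1`. -/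
theorem gerschgorin_timestep_bound (n : ℕ) [NeZero n]
    (A : Matrix (Fin n) (Fin n) ℝ) (m : Fin n → ℝ) (hm : ∀ i, 0 < m i)
    (hr : ∀ i, 0 < A i i + ∑ j ∈ univ \ {i}, |A i j|)
    (dt : ℝ) (hdt0 : 0 < dt)
    (hdt : dt ≤ univ.inf' univ_nonempty
      (fun i => m i / (A i i + ∑ j ∈ univ \ {i}, |A i j|)))
    (mu : ℝ) (hmu : 0 ≤ mu)
    (v : Fin n → ℝ) (hv : v ≠ 0)
    (hev : ((Matrix.diagonal m)⁻¹ * A).mulVec v = mu • v) :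
    dt * mu ≤ 1 := by
  -- choose index of maximal |v i|
  obtain ⟨i0, -, hmax⟩ := Finset.exists_max_image univ (fun i => |v i|) univ_nonempty
  have hvi0 : 0 < |v i0| := by
    obtain ⟨k, hk⟩ := Function.ne_iff.mp hv
    exact lt_of_lt_of_le (abs_pos.mpr hk) (hmax k (mem_univ k))
  -- rewrite the inverse of the diagonal
  have hinv : (Matrix.diagonal m)⁻¹ = Matrix.diagonal (fun i => (m i)⁻¹) :=
    Matrix.inv_eq_right_inv (by
      rw [Matrix.diagonal_mul_diagonal, ← Matrix.diagonal_one]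
      have h1 : (fun i => m i * (m i)⁻¹) = fun _ => (1 : ℝ) :=
        funext fun i => mul_inv_cancel₀ (hm i).ne'
      rw [h1])
  rw [hinv] at hev
  have hrow := congrFun hev i0
  have hrow' : (m i0)⁻¹ * (∑ j, A i0 j * v j) = mu * v i0 := by
    simpa [Matrix.mulVec, dotProduct, Matrix.diagonal_mul, Finset.mul_sum,
      mul_assoc] using hrow
  have hsum : ∑ j, A i0 j * v j = m i0 * (mu * v i0) := by
    have hm0 := (hm i0).ne'
    field_simp at hrow'
    linarith [hrow']
  set R := ∑ j ∈ univ \ {i0}, |A i0 j| with hR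
  have hsplit : ∑ j, A i0 j * v j = A i0 i0 * v i0 + ∑ j ∈ univ \ {i0}, A i0 j * v j := by
    rw [Finset.sum_eq_sum_sdiff_singleton_add (mem_univ i0) (fun j => A i0 j * v j)]
    ring
  have hdiff : (mu * m i0 - A i0 i0) * v i0 = ∑ j ∈ univ \ {i0}, A i0 j * v j := by
    rw [hsplit] at hsum
    ring_nf
    ring_nf at hsum
    linarith [hsum]
  have hbound : |mu * m i0 - A i0 i0| * |v i0| ≤ R * |v i0| := by
    rw [← abs_mul, hdiff, hR, Finset.sum_mul]
    refine le_trans (Finset.abs_sum_le_sum_abs _ _) (Finset.sum_le_sum ?_)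
    intro j hj
    rw [abs_mul]
    exact mul_le_mul_of_nonneg_left (hmax j (mem_univ j)) (abs_nonneg _)
  have hbound2 : mu * m i0 - A i0 i0 ≤ R :=
    le_trans (le_abs_self _) (le_of_mul_le_mul_right hbound hvi0)
  have hc : 0 < A i0 i0 + R := hr i0
  have hdti : dt ≤ m i0 / (A i0 i0 + R) :=
    le_trans hdt (Finset.inf'_le _ (mem_univ i0))
  have hdtc : dt * (A i0 i0 + R) ≤ m i0 := (le_div_iff₀ hc).mp hdti
  nlinarith [mul_pos hdt0 (hm i0), hm i0, mul_le_mul_of_nonneg_left hbound2 hdt0.le]
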